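/- Let a_1, a_2, b_1, b_2 be reals. Then v(t) = t^{a_1} + t^{a_2} − t^{b_1} − t^{b_2} ≥ 0 for all t ∈ (0,1] if and only if min(a_1,a_2) ≤ min(b_1,b_2) and a_1 + a_2 ≤ b_1 + b_2. -/

import Mathlib

open Set Real Filter Topology

-- convexity of exponent ↦ t^exponent at an intermediate point
lemma key15 (t a₁ a₂ b : ℝ) (ht : 0 < t) (h1 : a₁ ≤ b) (h2 : b ≤ a₂) (hlt : a₁ < a₂) :
    t ^ b ≤ (a₂ - b) / (a₂ - a₁) * t ^ a₁ + (b - a₁) / (a₂ - a₁) * t ^ a₂ := by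
  have hd : (0:ℝ) < a₂ - a₁ := by linarith
  set l := (a₂ - b) / (a₂ - a₁) with hl
  set m := (b - a₁) / (a₂ - a₁) with hm
  have hl0 : 0 ≤ l := div_nonneg (by linarith) hd.le
  have hm0 : 0 ≤ m := div_nonneg (by linarith) hd.le
  have hsum : l + m = 1 := by
    rw [hl, hm, ← add_div, show a₂ - b + (b - a₁) = a₂ - a₁ by ring, div_self hd.ne']
  have hcomb : l * a₁ + m * a₂ = b := by
    rw [hl, hm]; field_simp; ring
  have hc := convexOn_exp.2 (Set.mem_univ (Real.log t * a₁)) (Set.mem_univ (Real.log t * a₂)) hl0 hm0 hsum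
  simp only [smul_eq_mul] at hc
  have e1 : l * (Real.log t * a₁) + m * (Real.log t * a₂) = Real.log t * b := by
    rw [← hcomb]; ring
  rw [e1] at hc
  rw [Real.rpow_def_of_pos ht, Real.rpow_def_of_pos ht, Real.rpow_def_of_pos ht]
  exact hc

lemma suff15 (a₁ a₂ b₁ b₂ : ℝ) (hA : a₁ ≤ a₂) (hB : b₁ ≤ b₂) (h1 : a₁ ≤ b₁)
    (h2 : a₁ + a₂ ≤ b₁ + b₂) (t : ℝ) (ht0 : 0 < t) (ht1 : t ≤ 1) :
    t ^ b₁ + t ^ b₂ ≤ t ^ a₁ + t ^ a₂ := by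
  rcases le_or_gt b₂ a₂ with hc | hc
  · -- convexity case: a₁ ≤ b₁ ≤ b₂ ≤ a₂
    rcases eq_or_lt_of_le (h1.trans (hB.trans hc)) with he | hlt
    · have e1 : b₁ = a₁ := le_antisymm (by linarith [hB.trans hc, he.ge]) h1
      have e2 : b₂ = a₂ := by linarith [hB, hc, he.le, h1]
      rw [e1, e2]
    · have k1 := key15 t a₁ a₂ b₁ ht0 h1 (hB.trans hc) hlt
      have k2 := key15 t a₁ a₂ b₂ ht0 (h1.trans hB) hc hlt
      have hta : t ^ a₂ ≤ t ^ a₁ := Real.rpow_le_rpow_of_exponent_ge ht0 ht1 hA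
      have hd : (0:ℝ) < a₂ - a₁ := by linarith
      have key : (a₂ - a₁) * (t ^ b₁ + t ^ b₂) ≤ (a₂ - a₁) * (t ^ a₁ + t ^ a₂) := by
        have k1' : (a₂ - a₁) * t ^ b₁ ≤ (a₂ - b₁) * t ^ a₁ + (b₁ - a₁) * t ^ a₂ := by
          have := mul_le_mul_of_nonneg_left k1 hd.le
          calc (a₂ - a₁) * t ^ b₁ = (a₂ - a₁) * (t ^ b₁) := rfl
            _ ≤ (a₂ - a₁) * ((a₂ - b₁) / (a₂ - a₁) * t ^ a₁ + (b₁ - a₁) / (a₂ - a₁) * t ^ a₂) := this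
            _ = (a₂ - b₁) * t ^ a₁ + (b₁ - a₁) * t ^ a₂ := by field_simp
        have k2' : (a₂ - a₁) * t ^ b₂ ≤ (a₂ - b₂) * t ^ a₁ + (b₂ - a₁) * t ^ a₂ := by
          have := mul_le_mul_of_nonneg_left k2 hd.le
          calc (a₂ - a₁) * t ^ b₂ ≤ (a₂ - a₁) * ((a₂ - b₂) / (a₂ - a₁) * t ^ a₁ + (b₂ - a₁) / (a₂ - a₁) * t ^ a₂) := this
            _ = (a₂ - b₂) * t ^ a₁ + (b₂ - a₁) * t ^ a₂ := by field_simp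
        nlinarith [mul_nonneg (sub_nonneg.2 h2) (sub_nonneg.2 hta)]
      exact le_of_mul_le_mul_left key hd
  · -- monotone case: a₂ < b₂, a₁ ≤ b₁
    have e1 : t ^ b₁ ≤ t ^ a₁ := Real.rpow_le_rpow_of_exponent_ge ht0 ht1 h1
    have e2 : t ^ b₂ ≤ t ^ a₂ := Real.rpow_le_rpow_of_exponent_ge ht0 ht1 hc.le
    linarith

theorem stmt15 (a₁ a₂ b₁ b₂ : ℝ) :
    (∀ t ∈ Set.Ioc (0:ℝ) 1, 0 ≤ t ^ a₁ + t ^ a₂ - t ^ b₁ - t ^ b₂) ↔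
      (min a₁ a₂ ≤ min b₁ b₂ ∧ a₁ + a₂ ≤ b₁ + b₂) := by
  constructor
  · intro h
    constructor
    · -- min a ≤ min b, by contradiction near 0
      by_contra hcon
      push_neg at hcon
      set m := min b₁ b₂ with hm
      set ε := min a₁ a₂ - m with hε
      have hε0 : 0 < ε := by simp only [hε]; linarith
      set t₀ : ℝ := (1/4 : ℝ) ^ (1/ε) with ht₀
      have ht0 : 0 < t₀ := Real.rpow_pos_of_pos (by norm_num) _
      have ht1 : t₀ ≤ 1 := Real.rpow_le_one (by norm_num) (by norm_num) (by positivity)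
      have htε : t₀ ^ ε = 1/4 := by
        rw [ht₀, ← Real.rpow_mul (by norm_num : (0:ℝ) ≤ 1/4)]
        rw [show 1/ε*ε = 1 by field_simp, Real.rpow_one]
      have hbd : ∀ c : ℝ, min a₁ a₂ ≤ c → t₀ ^ c ≤ t₀ ^ m * (1/4) := by
        intro c hcge
        have : t₀ ^ c ≤ t₀ ^ (m + ε) := Real.rpow_le_rpow_of_exponent_ge ht0 ht1 (by simp only [hε]; linarith)
        rwa [Real.rpow_add ht0, htε] at this
      have h1 := hbd a₁ (min_le_left _ _)
      have h2 := hbd a₂ (min_le_right _ _)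
      have hv := h t₀ ⟨ht0, ht1⟩
      have hmb : t₀ ^ m ≤ t₀ ^ b₁ + t₀ ^ b₂ := by
        rcases min_cases b₁ b₂ with ⟨hm1, _⟩ | ⟨hm1, _⟩
        · rw [hm, hm1]
          nlinarith [Real.rpow_pos_of_pos ht0 b₂]
        · rw [hm, hm1]
          nlinarith [Real.rpow_pos_of_pos ht0 b₁]
      have hmpos : 0 < t₀ ^ m := Real.rpow_pos_of_pos ht0 m
      nlinarith
    · -- sum inequality via derivative at 1
      set v : ℝ → ℝ := fun t => t ^ a₁ + t ^ a₂ - t ^ b₁ - t ^ b₂ with hv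
      have hd : HasDerivAt v (a₁ + a₂ - b₁ - b₂) 1 := by
        have d1 : HasDerivAt (fun x : ℝ => x ^ a₁) (a₁ * (1:ℝ) ^ (a₁ - 1)) 1 :=
          Real.hasDerivAt_rpow_const (Or.inl one_ne_zero)
        have d2 : HasDerivAt (fun x : ℝ => x ^ a₂) (a₂ * (1:ℝ) ^ (a₂ - 1)) 1 :=
          Real.hasDerivAt_rpow_const (Or.inl one_ne_zero)
        have d3 : HasDerivAt (fun x : ℝ => x ^ b₁) (b₁ * (1:ℝ) ^ (b₁ - 1)) 1 :=
          Real.hasDerivAt_rpow_const (Or.inl one_ne_zero)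
        have d4 : HasDerivAt (fun x : ℝ => x ^ b₂) (b₂ * (1:ℝ) ^ (b₂ - 1)) 1 :=
          Real.hasDerivAt_rpow_const (Or.inl one_ne_zero)
        have := ((d1.add d2).sub d3).sub d4
        simp only [Real.one_rpow, mul_one] at this; exact this
      have hdw : HasDerivWithinAt v (a₁ + a₂ - b₁ - b₂) (Iio 1) 1 := hd.hasDerivWithinAt
      rw [hasDerivWithinAt_iff_tendsto_slope] at hdw
      have hsub : (Iio (1:ℝ)) \ {1} = Iio 1 := by
        simp [Set.diff_singleton_eq_self]
      rw [hsub] at hdw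
      have hv1 : v 1 = 0 := by simp [hv, Real.one_rpow]
      have hev : ∀ᶠ s in 𝓝[<] (1:ℝ), slope v 1 s ≤ 0 := by
        have hmem : Set.Ioo (0:ℝ) 1 ∈ 𝓝[<] (1:ℝ) :=
          Ioo_mem_nhdsLT_of_mem (by constructor <;> norm_num)
        filter_upwards [hmem] with s hs
        have hvs : 0 ≤ v s := h s ⟨hs.1, hs.2.le⟩
        rw [slope_def_field]
        have : s - 1 < 0 := by linarith [hs.2]
        rw [hv1, sub_zero]
        exact div_nonpos_of_nonneg_of_nonpos hvs this.le
      have := le_of_tendsto hdw hev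
      linarith
  · rintro ⟨hm, hs⟩ t ⟨ht0, ht1⟩
    have key := suff15 (min a₁ a₂) (max a₁ a₂) (min b₁ b₂) (max b₁ b₂)
      (min_le_max) (min_le_max) hm
      (by rw [min_add_max, min_add_max]; exact hs) t ht0 ht1
    have ea : t ^ min a₁ a₂ + t ^ max a₁ a₂ = t ^ a₁ + t ^ a₂ := by
      rcases le_total a₁ a₂ with hle | hle
      · rw [min_eq_left hle, max_eq_right hle]
      · rw [min_eq_right hle, max_eq_left hle]; ring
    have eb : t ^ min b₁ b₂ + t ^ max b₁ b₂ = t ^ b₁ + t ^ b₂ := by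
      rcases le_total b₁ b₂ with hle | hle
      · rw [min_eq_left hle, max_eq_right hle]
      · rw [min_eq_right hle, max_eq_left hle]; ring
    rw [ea, eb] at key
    linarith
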